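/- Let F be a free group (e.g. F = FreeGroup α) and let A be a nontrivial free factor of F. Then: (i) A is self-normalizing, i.e., if x ∈ F satisfies xAx⁻¹ = A, then x ∈ A; and (ii) consequently, if Φ and Φ' are automorphisms of F representing the same outer automorphism (Φ'(b) = xΦ(b)x⁻¹ for all b ∈ F, for some fixed x ∈ F) and both satisfy Φ(A) = A and Φ'(A) = A, then there exists a ∈ A such that Φ'(b) = aΦ(b)a⁻¹ for all b ∈ A; hence the restriction to A determines a well-defined outer automorphism of A depending only on the outer class of Φ. -/

import Mathlib

/-- `A` is a free factor of `F` if there is a subgroup `B` such that `F` is the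
internal free product of `A` and `B`, i.e. the canonical homomorphism from the
coproduct `A ∗ B` to `F` is an isomorphism. -/
def IsFreeFactor {F : Type*} [Group F] (A : Subgroup F) : Prop :=
  ∃ B : Subgroup F, Function.Bijective ⇑(Monoid.Coprod.lift A.subtype B.subtype)

/-- The conjugate subgroup `x A x⁻¹`. -/
def conjSubgroup {F : Type*} [Group F] (x : F) (A : Subgroup F) : Subgroup F :=
  A.map (MulAut.conj x).toMonoidHom

open Monoid

/-- Key combinatorial lemma: in a free product `CoprodI G`, if conjugation by `x`
sends the image of `G I` into itself and `G I` is nontrivial, then `x` itself lies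
in the image of `G I`.  Proved by strong induction on the length of the reduced
word of `x`. -/
private theorem coprodI_main {ι : Type*} {G : ι → Type*} [∀ i, Group (G i)]
    [DecidableEq ι] [∀ i, DecidableEq (G i)] (I : ι) :
    ∀ (n : ℕ) (x : CoprodI G),
      (CoprodI.Word.equiv x).toList.length = n →
      (∀ g : G I, ∃ g' : G I, x * CoprodI.of g * x⁻¹ = CoprodI.of g') →
      (∃ h : G I, h ≠ 1) → ∃ g : G I, x = CoprodI.of g := by
  intro n
  induction n using Nat.strong_induction_on with
  | _ n ih =>
  intro x hlen hx hnt
  have hxw : (CoprodI.Word.equiv x).prod = x := CoprodI.Word.equiv.symm_apply_apply x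
  have hprodeq : ∀ w' : CoprodI.Word G, CoprodI.Word.equiv w'.prod = w' := fun w' =>
    CoprodI.Word.equiv.apply_symm_apply w'
  by_cases hemp : (CoprodI.Word.equiv x).toList = []
  · refine ⟨1, ?_⟩
    rw [← hxw, map_one, CoprodI.Word.prod, hemp]
    simp
  · rcases hgl : (CoprodI.Word.equiv x).toList.getLast hemp with ⟨j, b⟩
    have hl2 : (CoprodI.Word.equiv x).toList =
        (CoprodI.Word.equiv x).toList.dropLast ++ [⟨j, b⟩] := by
      conv_lhs => rw [← List.dropLast_append_getLast hemp]
      rw [hgl]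
    by_cases hjI : j = I
    · -- strip the last letter, which lies in `G I`
      subst hjI
      have hdne : ∀ l ∈ (CoprodI.Word.equiv x).toList.dropLast, Sigma.snd l ≠ 1 :=
        fun l hlmem => (CoprodI.Word.equiv x).ne_one l ((List.dropLast_sublist _).subset hlmem)
      have hdch := (CoprodI.Word.equiv x).chain_ne.dropLast
      have hx2 : x = (⟨(CoprodI.Word.equiv x).toList.dropLast, hdne, hdch⟩ :
          CoprodI.Word G).prod * CoprodI.of b := by
        conv_lhs => rw [← hxw]
        rw [CoprodI.Word.prod, CoprodI.Word.prod]
        conv_lhs => rw [hl2]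
        rw [List.map_append, List.prod_append]
        simp
      set y := (⟨(CoprodI.Word.equiv x).toList.dropLast, hdne, hdch⟩ : CoprodI.Word G).prod
        with hy
      have hyhyp : ∀ g : G j, ∃ g' : G j, y * CoprodI.of g * y⁻¹ = CoprodI.of g' := by
        intro g
        obtain ⟨g', hg'⟩ := hx (b⁻¹ * g * b)
        refine ⟨g', ?_⟩
        rw [← hg', hx2]
        simp [map_mul, map_inv, mul_inv_rev, mul_assoc]
      have hlt : (CoprodI.Word.equiv y).toList.length < n := by
        rw [hy, hprodeq]
        have h2 : (CoprodI.Word.equiv x).toList.length ≠ 0 := by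
          simpa using hemp
        have h3 : ((⟨(CoprodI.Word.equiv x).toList.dropLast, hdne, hdch⟩ :
            CoprodI.Word G)).toList.length = (CoprodI.Word.equiv x).toList.length - 1 := by
          simp
        omega
      obtain ⟨g, hg⟩ := ih _ hlt y rfl hyhyp hnt
      exact ⟨g * b, by rw [hx2, hg, ← map_mul]⟩
    · -- the last letter is not in `G I`: derive a contradiction
      exfalso
      obtain ⟨h, hh1⟩ := hnt
      obtain ⟨g', hg'⟩ := hx h
      -- the reduced word of `x * of h * x⁻¹`
      have hL1 : ∀ l ∈ (CoprodI.Word.equiv x).toList ++ (⟨I, h⟩ :: (((CoprodI.Word.equiv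
          x).toList.reverse).map fun p => (⟨p.1, p.2⁻¹⟩ : Σ i, G i))), Sigma.snd l ≠ 1 := by
        intro l hlmem
        rcases List.mem_append.mp hlmem with hmem | hmem
        · exact (CoprodI.Word.equiv x).ne_one l hmem
        · rcases List.mem_cons.mp hmem with rfl | hmem
          · exact hh1
          · obtain ⟨p, hp, rfl⟩ := List.mem_map.mp hmem
            exact inv_ne_one.mpr ((CoprodI.Word.equiv x).ne_one p (List.mem_reverse.mp hp))
      have hlast? : (CoprodI.Word.equiv x).toList.getLast? = some ⟨j, b⟩ := by
        rw [List.getLast?_eq_getLast hemp, hgl]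
      have hL2 : ((CoprodI.Word.equiv x).toList ++ (⟨I, h⟩ :: (((CoprodI.Word.equiv
          x).toList.reverse).map fun p => (⟨p.1, p.2⁻¹⟩ : Σ i, G i)))).IsChain
          (fun l l' => l.1 ≠ l'.1) := by
        rw [List.isChain_append]
        refine ⟨(CoprodI.Word.equiv x).chain_ne, ?_, ?_⟩
        · rw [List.isChain_cons]
          constructor
          · intro q hq
            rw [List.head?_map, List.head?_reverse, hlast?] at hq
            simp only [Option.map_some, Option.mem_def, Option.some.injEq] at hq
            subst hq
            exact fun hc => hjI hc.symm
          · rw [List.isChain_map, List.isChain_reverse]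
            exact (CoprodI.Word.equiv x).chain_ne.imp fun _ _ hab => Ne.symm hab
        · intro p hp q hq
          rw [Option.mem_def, hlast?, Option.some.injEq] at hp
          rw [Option.mem_def, List.head?_cons, Option.some.injEq] at hq
          subst hp; subst hq
          exact hjI
      -- its product is the conjugate
      have hinv' : (List.map ((fun l : Σ i, G i => (CoprodI.of l.2 : CoprodI G)) ∘
          fun p : Σ i, G i => (⟨p.1, p.2⁻¹⟩ : Σ i, G i))
          (CoprodI.Word.equiv x).toList.reverse).prod =
          ((List.map (fun l : Σ i, G i => (CoprodI.of l.2 : CoprodI G))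
            (CoprodI.Word.equiv x).toList).prod)⁻¹ := by
        rw [List.prod_inv_reverse, List.map_map, ← List.map_reverse]
        congr 1
      have hWp : (⟨_, hL1, hL2⟩ : CoprodI.Word G).prod = x * CoprodI.of h * x⁻¹ := by
        conv_rhs => rw [← hxw]
        simp only [CoprodI.Word.prod, List.map_append, List.prod_append, List.map_cons,
          List.prod_cons, List.map_map]
        rw [hinv']
        try rw [mul_assoc]
      have hg'1 : g' ≠ 1 := by
        rintro rfl
        rw [map_one] at hg'
        have hof : CoprodI.of (M := G) h = 1 := by
          have := congrArg (fun z => x⁻¹ * z * x) hg'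
          simpa [mul_assoc] using this
        exact hh1 (CoprodI.of_injective I (by rw [hof, map_one]))
      have hS1 : ∀ l ∈ ([⟨I, g'⟩] : List (Σ i, G i)), Sigma.snd l ≠ 1 := by
        simpa using hg'1
      have hS2 : ([(⟨I, g'⟩ : Σ i, G i)]).Chain' (fun l l' => l.1 ≠ l'.1) :=
        List.isChain_singleton _
      have hW1 : (⟨[⟨I, g'⟩], hS1, hS2⟩ : CoprodI.Word G).prod = CoprodI.of g' := by
        rw [CoprodI.Word.prod]
        simp
      have hWW : (⟨_, hL1, hL2⟩ : CoprodI.Word G) = ⟨[⟨I, g'⟩], hS1, hS2⟩ := by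
        rw [← hprodeq ⟨_, hL1, hL2⟩, ← hprodeq ⟨[⟨I, g'⟩], hS1, hS2⟩, hWp, hW1, hg']
      have hlen2 := congrArg (fun u : CoprodI.Word G => u.toList.length) hWW
      simp only [List.length_append, List.length_cons, List.length_map,
        List.length_reverse, List.length_singleton, List.length_nil] at hlen2
      have : (CoprodI.Word.equiv x).toList.length ≠ 0 := by simpa using hemp
      omega

universe u

private abbrev CondG (H K : Type u) : Bool → Type u := fun b => cond b H K

private instance condGroup {H K : Type u} [Group H] [Group K] :
    ∀ b : Bool, Group (CondG H K b) := fun b => by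
  cases b <;> dsimp only [CondG, cond] <;> infer_instance

private def phiCG (H K : Type u) [Group H] [Group K] :
    Coprod H K →* CoprodI (CondG H K) :=
  Coprod.lift (CoprodI.of (M := CondG H K) (i := true))
    (CoprodI.of (M := CondG H K) (i := false))

private def psiCG (H K : Type u) [Group H] [Group K] :
    CoprodI (CondG H K) →* Coprod H K :=
  CoprodI.lift fun b => Bool.rec (motive := fun b => CondG H K b →* Coprod H K)
    Coprod.inr Coprod.inl b

private theorem phi_inl {H K : Type u} [Group H] [Group K] (g : H) :
    phiCG H K (Coprod.inl g) = CoprodI.of (M := CondG H K) (i := true) g :=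
  Coprod.lift_apply_inl _ _ g

private theorem psi_of {H K : Type u} [Group H] [Group K] (g : CondG H K true) :
    psiCG H K (CoprodI.of g) = Coprod.inl g := by
  rw [psiCG, CoprodI.lift_of]

private theorem phi_inr {H K : Type u} [Group H] [Group K] (g : K) :
    phiCG H K (Coprod.inr g) = CoprodI.of (M := CondG H K) (i := false) g :=
  Coprod.lift_apply_inr _ _ g

private theorem psi_of' {H K : Type u} [Group H] [Group K] (g : CondG H K false) :
    psiCG H K (CoprodI.of g) = Coprod.inr g := by
  rw [psiCG, CoprodI.lift_of]

private theorem psi_phi {H K : Type u} [Group H] [Group K] (z : Coprod H K) :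
    psiCG H K (phiCG H K z) = z := by
  have h1 : (psiCG H K).comp (phiCG H K) = MonoidHom.id _ := by
    apply Coprod.hom_ext <;> ext g <;>
      simp only [MonoidHom.comp_apply, MonoidHom.coe_comp, Function.comp_apply,
        MonoidHom.id_comp, MonoidHom.id_apply]
    · rw [phi_inl]; exact psi_of g
    · rw [phi_inr]; exact psi_of' g
  exact DFunLike.congr_fun h1 z

/-- The self-normalizing property at the level of binary coproducts. -/
private theorem coprod_selfnorm {H K : Type u} [Group H] [Group K]
    (x : Coprod H K)
    (hx : ∀ g : H, ∃ g' : H, x * Coprod.inl g * x⁻¹ = Coprod.inl g')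
    (hnt : ∃ h : H, h ≠ 1) : ∃ g : H, x = Coprod.inl g := by
  classical
  have hyp : ∀ g : CondG H K true, ∃ g' : CondG H K true,
      phiCG H K x * CoprodI.of (M := CondG H K) (i := true) g * (phiCG H K x)⁻¹
        = CoprodI.of (M := CondG H K) (i := true) g' := by
    intro g
    obtain ⟨g', hg'⟩ := hx g
    refine ⟨g', ?_⟩
    have hc := congrArg (phiCG H K) hg'
    rw [map_mul, map_mul, map_inv, phi_inl, phi_inl] at hc
    exact hc
  obtain ⟨g, hg⟩ := coprodI_main (G := CondG H K) true _ (phiCG H K x) rfl hyp hnt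
  refine ⟨g, ?_⟩
  have h2 := congrArg (psiCG H K) hg
  rw [psi_phi] at h2
  exact h2.trans (psi_of g)

/-- A nontrivial free factor `A` of a free group is self-normalizing, and hence
two automorphisms in the same outer class that both preserve `A` have restrictions
to `A` differing by an inner automorphism of `A`; so the restriction to `A`
determines a well-defined outer automorphism of `A`. -/
theorem statement_9 {α : Type*} (A : Subgroup (FreeGroup α))
    (hff : IsFreeFactor A) (hnt : A ≠ ⊥) :
    (∀ x : FreeGroup α, conjSubgroup x A = A → x ∈ A) ∧
      (∀ Φ Φ' : MulAut (FreeGroup α),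
        (∃ x : FreeGroup α, ∀ b : FreeGroup α, Φ' b = x * Φ b * x⁻¹) →
        A.map Φ.toMonoidHom = A → A.map Φ'.toMonoidHom = A →
        ∃ a ∈ A, ∀ b ∈ A, Φ' b = a * Φ b * a⁻¹) := by
  obtain ⟨B, hbij⟩ := hff
  let e : Coprod ↥A ↥B ≃* FreeGroup α := MulEquiv.ofBijective _ hbij
  have he_inl : ∀ a : ↥A, e (Coprod.inl a) = ↑a := fun a =>
    Coprod.lift_apply_inl A.subtype B.subtype a
  have part1 : ∀ x : FreeGroup α, conjSubgroup x A = A → x ∈ A := by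
    intro x hconj
    obtain ⟨h0, hh0⟩ := Subgroup.ne_bot_iff_exists_ne_one.mp hnt
    have hx'' : e (e.symm x) = x := e.apply_symm_apply x
    have hyp : ∀ g : ↥A, ∃ g' : ↥A,
        e.symm x * Coprod.inl g * (e.symm x)⁻¹ = Coprod.inl g' := by
      intro g
      have hmem : x * ↑g * x⁻¹ ∈ conjSubgroup x A := by
        rw [conjSubgroup, Subgroup.mem_map]
        exact ⟨↑g, g.2, by simp⟩
      rw [hconj] at hmem
      refine ⟨⟨x * ↑g * x⁻¹, hmem⟩, ?_⟩
      apply e.injective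
      rw [map_mul, map_mul, map_inv, hx'', he_inl, he_inl]
    obtain ⟨g, hg⟩ := coprod_selfnorm (e.symm x) hyp ⟨h0, hh0⟩
    have hxg : x = ↑g := by
      rw [← hx'', hg, he_inl]
    rw [hxg]
    exact g.2
  refine ⟨part1, ?_⟩
  rintro Φ Φ' ⟨x, hx⟩ hA hA'
  have hcomp : (MulAut.conj x).toMonoidHom.comp Φ.toMonoidHom = Φ'.toMonoidHom := by
    ext b
    simp [hx]
  have hconj : conjSubgroup x A = A := by
    calc A.map (MulAut.conj x).toMonoidHom
        = (A.map Φ.toMonoidHom).map (MulAut.conj x).toMonoidHom := by rw [hA]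
      _ = A.map ((MulAut.conj x).toMonoidHom.comp Φ.toMonoidHom) := by
          rw [Subgroup.map_map]
      _ = A := by rw [hcomp, hA']
  exact ⟨x, part1 x hconj, fun b _ => hx b⟩
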